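/- The orbit space N_s/Sp(n,ℝ) — the quotient of N_s (with the subspace topology from V) by the orbit equivalence relation of the Sp(n,ℝ)-action, equipped with the quotient topology — is a contractible topological space. (The moduli space of all 2n-dimensional symplectic nilpotent Lie groups up to isomorphism is contractible.) -/
import Mathlib


open scoped BigOperators
open Matrix

noncomputable section

/-- vectors in `ℝ^m`. -/
abbrev Vec (m : ℕ) := Fin m → ℝ

/-- bilinear-map candidates `ℝ^m × ℝ^m → ℝ^m`. -/
abbrev Bil (m : ℕ) := Vec m → Vec m → Vec m

/-- the `i`-th standard basis vector of `ℝ^m`. -/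
def bvec (m : ℕ) (i : Fin m) : Vec m := Pi.single i 1

/-- `μ` is a skew-symmetric bilinear map, i.e. an element of `V = Λ²(ℝ^m)* ⊗ ℝ^m`. -/
def IsSkewBil {m : ℕ} (μ : Bil m) : Prop :=
  (∀ Y, IsLinearMap ℝ fun X => μ X Y) ∧ (∀ X, IsLinearMap ℝ (μ X)) ∧ ∀ X Y, μ X Y = -μ Y X

/-- the Jacobi identity for `μ`. -/
def IsJacobi {m : ℕ} (μ : Bil m) : Prop :=
  ∀ X Y Z, μ (μ X Y) Z + μ (μ Y Z) X + μ (μ Z X) Y = 0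

/-- iterated left multiplications `μ(X (k-1), ⋯ μ(X 0, Y))`. -/
def adPow {m : ℕ} (μ : Bil m) (X : ℕ → Vec m) : ℕ → Vec m → Vec m
  | 0, Y => Y
  | k + 1, Y => μ (X k) (adPow μ X k Y)

/-- nilpotency of the bracket `μ`. -/
def IsNilpotentBil {m : ℕ} (μ : Bil m) : Prop :=
  ∃ k : ℕ, ∀ (X : ℕ → Vec m) (Y : Vec m), adPow μ X k Y = 0

/-- membership in the variety `N` of nilpotent Lie brackets on `ℝ^m`. -/
def NilBracket {m : ℕ} (μ : Bil m) : Prop :=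
  IsSkewBil μ ∧ IsJacobi μ ∧ IsNilpotentBil μ

/-- the `GL_m(ℝ)` action `(g.μ)(X,Y) = g μ(g⁻¹X, g⁻¹Y)` on `V`. -/
def mact {m : ℕ} (g : Matrix (Fin m) (Fin m) ℝ) (μ : Bil m) : Bil m :=
  fun X Y => g.mulVec (μ (g⁻¹.mulVec X) (g⁻¹.mulVec Y))

/-- `‖μ‖²` for the natural inner product on `V`. -/
def normSqV {m : ℕ} (μ : Bil m) : ℝ :=
  ∑ i, ∑ j, ∑ k, (μ (bvec m i) (bvec m j) k) ^ 2

/-- the Ricci operator of `(N_μ, ⟨·,·⟩)`, as a matrix: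
`⟨Ric_μ X, Y⟩ = -(1/2) Σ ⟨μ(X,Xᵢ),Xⱼ⟩⟨μ(Y,Xᵢ),Xⱼ⟩ + (1/4) Σ ⟨μ(Xᵢ,Xⱼ),X⟩⟨μ(Xᵢ,Xⱼ),Y⟩`. -/
def RicM {m : ℕ} (μ : Bil m) : Matrix (Fin m) (Fin m) ℝ :=
  Matrix.of fun x y =>
    -(1/2) * (∑ i, ∑ j, μ (bvec m x) (bvec m i) j * μ (bvec m y) (bvec m i) j)
    + (1/4) * (∑ i, ∑ j, μ (bvec m i) (bvec m j) x * μ (bvec m i) (bvec m j) y)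

/-- `D` is a derivation of the bracket `μ`. -/
def IsDerivation {m : ℕ} (μ : Bil m) (D : Matrix (Fin m) (Fin m) ℝ) : Prop :=
  ∀ X Y, D.mulVec (μ X Y) = μ (D.mulVec X) Y + μ X (D.mulVec Y)

/-- the matrix of `ad_μ X : Y ↦ μ(X,Y)`. -/
def adMat {m : ℕ} (μ : Bil m) (X : Vec m) : Matrix (Fin m) (Fin m) ℝ :=
  Matrix.of fun j i => μ X (bvec m i) j

/-- the moment-map value `M_μ = -4 Σᵢ (ad_μ Xᵢ)ᵗ(ad_μ Xᵢ) + 2 Σᵢ (ad_μ Xᵢ)(ad_μ Xᵢ)ᵗ`. -/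
def Mmat {m : ℕ} (μ : Bil m) : Matrix (Fin m) (Fin m) ℝ :=
  (-4 : ℝ) • (∑ i, (adMat μ (bvec m i))ᵀ * adMat μ (bvec m i))
    + (2 : ℝ) • (∑ i, adMat μ (bvec m i) * (adMat μ (bvec m i))ᵀ)

/-- the 2-form `ω(X,Y) = ⟨X, JY⟩`. -/
def sympForm {m : ℕ} (J : Matrix (Fin m) (Fin m) ℝ) (X Y : Vec m) : ℝ :=
  X ⬝ᵥ J.mulVec Y

/-- closedness of a 2-form `ω` with respect to the bracket `μ`:
`ω(μ(X,Y),Z) + ω(μ(Y,Z),X) + ω(μ(Z,X),Y) = 0`. -/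
def IsClosedForm {m : ℕ} (ω : Vec m → Vec m → ℝ) (μ : Bil m) : Prop :=
  ∀ X Y Z, ω (μ X Y) Z + ω (μ Y Z) X + ω (μ Z X) Y = 0

/-- membership in `Sp(n,ℝ)`: invertible and preserving `ω = ⟨·, J·⟩`. -/
def IsSymplMat {m : ℕ} (J g : Matrix (Fin m) (Fin m) ℝ) : Prop :=
  IsUnit g ∧ ∀ X Y, sympForm J (g.mulVec X) (g.mulVec Y) = sympForm J X Y

/-- membership in `GL(n,ℂ) = {g : gJ = Jg}`. -/
def IsCxMat {m : ℕ} (J g : Matrix (Fin m) (Fin m) ℝ) : Prop :=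
  IsUnit g ∧ g * J = J * g

/-- the anti-complexified Ricci operator `Ric^{ac} = (1/2)(Ric + J Ric J)`. -/
def Ricac {m : ℕ} (J : Matrix (Fin m) (Fin m) ℝ) (μ : Bil m) : Matrix (Fin m) (Fin m) ℝ :=
  (1/2 : ℝ) • (RicM μ + J * RicM μ * J)

/-- the complexified Ricci operator `Ric^{c} = (1/2)(Ric − J Ric J)`. -/
def Ricc {m : ℕ} (J : Matrix (Fin m) (Fin m) ℝ) (μ : Bil m) : Matrix (Fin m) (Fin m) ℝ :=
  (1/2 : ℝ) • (RicM μ - J * RicM μ * J)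

/-- scaling of a bilinear bracket. -/
def sBil {m : ℕ} (c : ℝ) (μ : Bil m) : Bil m := fun X Y => c • μ X Y

lemma sBil_one {m : ℕ} (μ : Bil m) : sBil 1 μ = μ := by
  funext X Y; simp [sBil]

lemma sBil_zero {m : ℕ} (μ ν : Bil m) : sBil 0 μ = sBil 0 ν := by
  funext X Y; simp [sBil]

lemma skew_sBil {m : ℕ} (c : ℝ) {μ : Bil m} (h : IsSkewBil μ) : IsSkewBil (sBil c μ) := by
  refine ⟨fun Y => ?_, fun X => ?_, fun X Y => ?_⟩
  · exact ⟨fun X X' => by simp [sBil, ((h.1 Y).map_add), smul_add],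
      fun a X => by simp only [sBil, (h.1 Y).map_smul]; rw [smul_comm]⟩
  · exact ⟨fun Y Y' => by simp [sBil, ((h.2.1 X).map_add), smul_add],
      fun a Y => by simp only [sBil, (h.2.1 X).map_smul]; rw [smul_comm]⟩
  · simp [sBil, h.2.2 X Y]

lemma jacobi_sBil {m : ℕ} (c : ℝ) {μ : Bil m} (hs : IsSkewBil μ) (hj : IsJacobi μ) :
    IsJacobi (sBil c μ) := by
  intro X Y Z
  have key : ∀ V W : Vec m, μ (c • V) W = c • μ V W := fun V W => (hs.1 W).map_smul c V
  show c • μ (c • μ X Y) Z + c • μ (c • μ Y Z) X + c • μ (c • μ Z X) Y = 0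
  simp only [key, ← smul_add]
  rw [hj X Y Z, smul_zero, smul_zero]

lemma adPow_sBil {m : ℕ} (c : ℝ) {μ : Bil m} (h : ∀ X, IsLinearMap ℝ (μ X))
    (X : ℕ → Vec m) : ∀ (k : ℕ) (Y : Vec m),
    adPow (sBil c μ) X k Y = c ^ k • adPow μ X k Y
  | 0, Y => by simp [adPow]
  | k + 1, Y => by
    rw [adPow, adPow_sBil c h X k Y, adPow]
    show c • μ (X k) (c ^ k • adPow μ X k Y) = c ^ (k + 1) • μ (X k) (adPow μ X k Y)
    rw [(h (X k)).map_smul, smul_smul, pow_succ, mul_comm]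

lemma nilp_sBil {m : ℕ} (c : ℝ) {μ : Bil m} (h : ∀ X, IsLinearMap ℝ (μ X))
    (hn : IsNilpotentBil μ) : IsNilpotentBil (sBil c μ) := by
  obtain ⟨k, hk⟩ := hn
  exact ⟨k, fun X Y => by rw [adPow_sBil c h X k Y, hk X Y, smul_zero]⟩

lemma closed_sBil {m : ℕ} (J : Matrix (Fin m) (Fin m) ℝ) (c : ℝ) {μ : Bil m}
    (h : IsClosedForm (sympForm J) μ) : IsClosedForm (sympForm J) (sBil c μ) := by
  intro X Y Z
  show sympForm J (c • μ X Y) Z + sympForm J (c • μ Y Z) X + sympForm J (c • μ Z X) Y = 0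
  have h' := h X Y Z
  simp only [sympForm] at h'
  simp only [sympForm, smul_dotProduct, smul_eq_mul]
  linear_combination c * h'

lemma nilbracket_sBil {m : ℕ} (c : ℝ) {μ : Bil m} (h : NilBracket μ) :
    NilBracket (sBil c μ) :=
  ⟨skew_sBil c h.1, jacobi_sBil c h.1 h.2.1, nilp_sBil c h.1.2.1 h.2.2⟩

lemma mact_sBil {m : ℕ} (g : Matrix (Fin m) (Fin m) ℝ) (c : ℝ) (μ : Bil m) :
    mact g (sBil c μ) = sBil c (mact g μ) := by
  funext X Y
  simp [mact, sBil, Matrix.mulVec_smul]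

lemma zero_nilbracket {m : ℕ} : NilBracket (fun _ _ => (0 : Vec m)) := by
  refine ⟨⟨fun Y => ⟨fun _ _ => by simp, fun _ _ => by simp⟩,
    fun X => ⟨fun _ _ => by simp, fun _ _ => by simp⟩, fun _ _ => by simp⟩,
    fun _ _ _ => by simp, 1, fun X Y => ?_⟩
  simp [adPow]

lemma zero_closed {m : ℕ} (J : Matrix (Fin m) (Fin m) ℝ) :
    IsClosedForm (sympForm J) (fun _ _ => (0 : Vec m)) := by
  intro X Y Z
  simp [sympForm]

/-- the moduli space `N_s/Sp(n,ℝ)` of 2n-dimensional symplectic nilpotent Lie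
groups up to isomorphism, with the quotient topology, is contractible. -/
theorem moduli_contractible (n : ℕ) (hn : 1 ≤ n)
    (J : Matrix (Fin (2 * n)) (Fin (2 * n)) ℝ) (hJskew : Jᵀ = -J) (hJsq : J * J = -1) :
    ContractibleSpace (Quot (fun μ ν :
        {μ : Bil (2 * n) // NilBracket μ ∧ IsClosedForm (sympForm J) μ} =>
      ∃ g : Matrix (Fin (2 * n)) (Fin (2 * n)) ℝ, IsSymplMat J g ∧ mact g μ.1 = ν.1)) := by
  rw [contractible_iff_id_nullhomotopic]
  let X := {μ : Bil (2 * n) // NilBracket μ ∧ IsClosedForm (sympForm J) μ}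
  let r : X → X → Prop := fun μ ν =>
      ∃ g : Matrix (Fin (2 * n)) (Fin (2 * n)) ℝ, IsSymplMat J g ∧ mact g μ.1 = ν.1
  let F : ℝ → X → X := fun c μ =>
    ⟨sBil c μ.1, nilbracket_sBil c μ.2.1, closed_sBil J c μ.2.2⟩
  let μ0 : X := ⟨fun _ _ => 0, zero_nilbracket, zero_closed J⟩
  refine ⟨Quot.mk r μ0, ?_⟩
  have wd : ∀ (c : ℝ) (μ ν : X), r μ ν → Quot.mk r (F c μ) = Quot.mk r (F c ν) := by
    rintro c μ ν ⟨g, hg, hgμ⟩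
    refine Quot.sound ⟨g, hg, ?_⟩
    show mact g (sBil c μ.1) = sBil c ν.1
    rw [mact_sBil, hgμ]
  let h : unitInterval × Quot r → Quot r := fun p =>
    Quot.lift (fun μ => Quot.mk r (F (1 - (p.1 : ℝ)) μ)) (wd _) p.2
  have hFcont : Continuous fun p : unitInterval × X => F (1 - (p.1 : ℝ)) p.2 := by
    refine Continuous.subtype_mk ?_ _
    refine continuous_pi fun V => continuous_pi fun W => continuous_pi fun i => ?_
    show Continuous fun p : unitInterval × X => (1 - (p.1 : ℝ)) * p.2.1 V W i
    exact ((continuous_const.sub (continuous_subtype_val.comp continuous_fst)).mul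
      ((continuous_apply i).comp ((continuous_apply W).comp ((continuous_apply V).comp
        (continuous_subtype_val.comp continuous_snd)))))
  have hq : Topology.IsQuotientMap (Quot.mk r) := isQuotientMap_quot_mk
  have hcont : Continuous h := by
    refine hq.continuous_lift_prod_right ?_
    exact (continuous_quot_mk.comp hFcont)
  refine ⟨{ toFun := h, continuous_toFun := hcont,
            map_zero_left := ?_, map_one_left := ?_ }⟩
  · refine fun x => Quot.inductionOn x fun μ => ?_
    show Quot.mk r (F (1 - ((0 : unitInterval) : ℝ)) μ) = Quot.mk r μ
    congr 1
    refine Subtype.ext ?_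
    show sBil (1 - ((0 : unitInterval) : ℝ)) μ.1 = μ.1
    rw [Set.Icc.coe_zero, sub_zero, sBil_one]
  · refine fun x => Quot.inductionOn x fun μ => ?_
    show Quot.mk r (F (1 - ((1 : unitInterval) : ℝ)) μ) = Quot.mk r μ0
    congr 1
    refine Subtype.ext ?_
    show sBil (1 - ((1 : unitInterval) : ℝ)) μ.1 = (fun _ _ => 0)
    rw [Set.Icc.coe_one, sub_self]
    funext A B
    simp [sBil]
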